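/- Entropy decomposition with weak dependence (Cesi-type): Let $\mu$ be a probability measure on a finite product space with coordinates indexed by $\Gamma=\Gamma_\ell\cup\Gamma_r$, $J=\Gamma_\ell\cap\Gamma_r$. Suppose there is $\epsilon\in[0,1/4]$ such that for all bounded $f_\ell$ measurable with respect to coordinates in $\Gamma_\ell\setminus J$ and all configurations $\sigma_r$ of the coordinates in $\Gamma_r\setminus J$: $|\mu(f_\ell\mid\sigma_r)-\mu(f_\ell)|\le\epsilon\,\mu(|f_\ell|)$, and symmetrically. Then there is a universal constant $K$ such that for all $f$: $\mathrm{Ent}_\mu(f^2) \le (1+K\epsilon)\,\mu\big[\mathrm{Ent}(f^2\mid\mathcal{F}_\ell) + \mathrm{Ent}(f^2\mid\mathcal{F}_r)\big]$, where $\mathcal{F}_\ell,\mathcal{F}_r$ are the sigma-algebras generated by the coordinates in $\Gamma_\ell\setminus J$ and $\Gamma_r\setminus J$ respectively. -/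

import Mathlib

open Finset

noncomputable section

/-- Marginal of `μ` on the first coordinate. -/
def margA {A B C : Type*} [Fintype B] [Fintype C] (μ : A × B × C → ℝ) (a : A) : ℝ :=
  ∑ b, ∑ c, μ (a, b, c)

/-- Marginal of `μ` on the last coordinate. -/
def margC {A B C : Type*} [Fintype A] [Fintype B] (μ : A × B × C → ℝ) (c : C) : ℝ :=
  ∑ a, ∑ b, μ (a, b, c)

/-- Conditional expectation of `g` given the first coordinate equals `a`. -/
def condExpA {A B C : Type*} [Fintype B] [Fintype C] (μ g : A × B × C → ℝ) (a : A) : ℝ :=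
  (∑ b, ∑ c, μ (a, b, c) * g (a, b, c)) / margA μ a

/-- Conditional expectation of `g` given the last coordinate equals `c`. -/
def condExpC {A B C : Type*} [Fintype A] [Fintype B] (μ g : A × B × C → ℝ) (c : C) : ℝ :=
  (∑ a, ∑ b, μ (a, b, c) * g (a, b, c)) / margC μ c

/-- Conditional entropy of `g` given the first coordinate. -/
def entA {A B C : Type*} [Fintype B] [Fintype C] (μ g : A × B × C → ℝ) (a : A) : ℝ :=
  condExpA μ (fun σ => g σ * Real.log (g σ)) a -
    condExpA μ g a * Real.log (condExpA μ g a)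

/-- Conditional entropy of `g` given the last coordinate. -/
def entC {A B C : Type*} [Fintype A] [Fintype B] (μ g : A × B × C → ℝ) (c : C) : ℝ :=
  condExpC μ (fun σ => g σ * Real.log (g σ)) c -
    condExpC μ g c * Real.log (condExpC μ g c)

section CesiAux
open Real

/-- `(x+1) log x - 2(x-1)` is monotone on `(0, ∞)`. -/
lemma cesiAux_mono :
    MonotoneOn (fun x : ℝ => (x + 1) * Real.log x - 2 * (x - 1)) (Set.Ioi (0:ℝ)) := by
  have hint : interior (Set.Ioi (0:ℝ)) = Set.Ioi 0 := interior_Ioi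
  apply monotoneOn_of_hasDerivWithinAt_nonneg (f' := fun x => Real.log x + (x + 1) * x⁻¹ - 2)
    (convex_Ioi 0)
  · apply ContinuousOn.sub
    · exact (continuousOn_id.add continuousOn_const).mul
        (Real.continuousOn_log.mono (fun x hx => ne_of_gt hx))
    · fun_prop
  · intro x hx
    rw [hint] at hx
    have hx0 : (x:ℝ) ≠ 0 := ne_of_gt hx
    have h1 : HasDerivAt (fun x : ℝ => (x + 1) * Real.log x)
        (1 * Real.log x + (x + 1) * x⁻¹) x :=
      ((hasDerivAt_id x).add_const 1).mul (Real.hasDerivAt_log hx0)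
    have h2 : HasDerivAt (fun x : ℝ => 2 * (x - 1)) 2 x := by
      simpa using ((hasDerivAt_id x).sub_const 1).const_mul 2
    have h3 := h1.sub h2
    rw [one_mul] at h3
    exact h3.hasDerivWithinAt
  · intro x hx
    rw [hint] at hx
    have hx' : (0:ℝ) < x := hx
    have := Real.one_sub_inv_le_log_of_pos hx'
    have hinv : 0 < x⁻¹ := inv_pos.2 hx'
    have : (x + 1) * x⁻¹ = 1 + x⁻¹ := by field_simp
    nlinarith [Real.one_sub_inv_le_log_of_pos hx']



/-- Key pointwise inequality for Pinsker: `3(x-1)² ≤ 2(x+2)(x log x - x + 1)` for `x ≥ 0`. -/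
lemma cesi_pointwise {x : ℝ} (hx : 0 ≤ x) :
    3 * (x - 1) ^ 2 ≤ 2 * (x + 2) * (x * Real.log x - x + 1) := by
  set F : ℝ → ℝ := fun x => 2 * (x + 2) * (x * Real.log x - x + 1) - 3 * (x - 1) ^ 2 with hF
  have hF1 : F 1 = 0 := by simp [hF]
  have hFc : Continuous F := by
    apply Continuous.sub
    · exact (continuous_const.mul (continuous_id.add continuous_const)).mul
        ((Real.continuous_mul_log.sub continuous_id).add continuous_const)
    · fun_prop
  have hderiv : ∀ y : ℝ, y ≠ 0 → HasDerivAt F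
      (4 * ((y + 1) * Real.log y - 2 * (y - 1))) y := by
    intro y hy
    have h1 : HasDerivAt (fun x : ℝ => 2 * (x + 2)) 2 y := by
      simpa using ((hasDerivAt_id y).add_const 2).const_mul 2
    have h2 : HasDerivAt (fun x : ℝ => x * Real.log x - x + 1) (Real.log y + 1 - 1) y :=
      ((Real.hasDerivAt_mul_log hy).sub (hasDerivAt_id y)).add_const 1
    have h3 : HasDerivAt (fun x : ℝ => 3 * (x - 1) ^ 2) (3 * (2 * (y - 1))) y := by
      have := (((hasDerivAt_id y).sub_const 1).pow 2).const_mul 3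
      simpa using this
    have := (h1.mul h2).sub h3
    exact this.congr_deriv (by ring)
  have hsign : ∀ y : ℝ, 0 ≤ F y ∨ True := fun _ => Or.inr trivial
  -- case split
  rcases le_or_gt x 1 with hx1 | hx1
  · -- F antitone on Set.Icc 0 1
    have hanti : AntitoneOn F (Set.Icc (0:ℝ) 1) := by
      apply antitoneOn_of_hasDerivWithinAt_nonpos
        (f' := fun y => 4 * ((y + 1) * Real.log y - 2 * (y - 1))) (convex_Icc 0 1)
        hFc.continuousOn
      · intro y hy
        rw [interior_Icc] at hy
        exact (hderiv y (ne_of_gt hy.1)).hasDerivWithinAt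
      · intro y hy
        rw [interior_Icc] at hy
        have h0 : (fun x : ℝ => (x + 1) * Real.log x - 2 * (x - 1)) y ≤
            (fun x : ℝ => (x + 1) * Real.log x - 2 * (x - 1)) 1 :=
          cesiAux_mono (Set.mem_Ioi.2 hy.1) (Set.mem_Ioi.2 one_pos) hy.2.le
        simp only [Real.log_one] at h0
        nlinarith [h0]
    have := hanti ⟨hx, hx1⟩ ⟨zero_le_one, le_refl 1⟩ hx1
    rw [hF1] at this
    simpa [hF] using this
  · -- F monotone on Set.Ici 1
    have hmono : MonotoneOn F (Set.Ici (1:ℝ)) := by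
      apply monotoneOn_of_hasDerivWithinAt_nonneg
        (f' := fun y => 4 * ((y + 1) * Real.log y - 2 * (y - 1))) (convex_Ici 1)
        hFc.continuousOn
      · intro y hy
        rw [interior_Ici] at hy
        exact (hderiv y (ne_of_gt (lt_trans one_pos (Set.mem_Ioi.1 hy)))).hasDerivWithinAt
      · intro y hy
        rw [interior_Ici] at hy
        have h0 : (fun x : ℝ => (x + 1) * Real.log x - 2 * (x - 1)) 1 ≤
            (fun x : ℝ => (x + 1) * Real.log x - 2 * (x - 1)) y :=
          cesiAux_mono (Set.mem_Ioi.2 one_pos) (Set.mem_Ioi.2 (lt_trans one_pos hy)) hy.le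
        simp only [Real.log_one] at h0
        nlinarith [h0]
    have := hmono (Set.self_mem_Ici) (Set.mem_Ici.2 hx1.le) hx1.le
    rw [hF1] at this
    simpa [hF] using this

end CesiAux



/-- Tangent line trick: for `c > 0`, `x log x ≥ x (log c + 1) - c`. -/
lemma cesi_tangent {x c : ℝ} (hx : 0 ≤ x) (hc : 0 < c) :
    x * (Real.log c + 1) - c ≤ x * Real.log x := by
  rcases eq_or_lt_of_le hx with h | h
  · simp [← h]; positivity
  · have h1 : Real.log (c / x) ≤ c / x - 1 := Real.log_le_sub_one_of_pos (by positivity)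
    rw [Real.log_div (ne_of_gt hc) (ne_of_gt h)] at h1
    have h2 : x * (Real.log c - Real.log x) ≤ x * (c / x - 1) := by
      exact mul_le_mul_of_nonneg_left h1 hx
    have h3 : x * (c / x - 1) = c - x := by field_simp
    nlinarith
lemma cesi_psi_nonneg {x : ℝ} (hx : 0 ≤ x) : 0 ≤ x * Real.log x - x + 1 := by
  have := cesi_tangent hx one_pos; simp at this; linarith

/-- Discrete Pinsker-type inequality (constant 2). -/
lemma cesi_pinsker {ι : Type} [Fintype ι] (p q : ι → ℝ) (hp : ∀ i, 0 ≤ p i)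
    (hq : ∀ i, 0 ≤ q i) (hp1 : ∑ i, p i = 1) (hq1 : ∑ i, p i * q i = 1) :
    (∑ i, p i * |q i - 1|) ^ 2 ≤ 2 * ∑ i, p i * (q i * Real.log (q i)) := by
  set ψ : ι → ℝ := fun i => q i * Real.log (q i) - q i + 1 with hψ
  have hψ0 : ∀ i, 0 ≤ ψ i := fun i => cesi_psi_nonneg (hq i)
  set f : ι → ℝ := fun i => Real.sqrt (p i * ψ i) with hf
  set g : ι → ℝ := fun i => Real.sqrt (p i * (2/3) * (q i + 2)) with hg
  have hpt : ∀ i, p i * |q i - 1| ≤ f i * g i := by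
    intro i
    rw [hf, hg, ← Real.sqrt_mul (mul_nonneg (hp i) (hψ0 i))]
    rw [show p i * |q i - 1| = Real.sqrt ((p i * |q i - 1|)^2) from
      (Real.sqrt_sq (mul_nonneg (hp i) (abs_nonneg _))).symm]
    apply Real.sqrt_le_sqrt
    have hL := cesi_pointwise (hq i)
    have : (p i * |q i - 1|)^2 = p i ^ 2 * (q i - 1)^2 := by
      rw [mul_pow, sq_abs]
    rw [this]
    have hp2 : (0:ℝ) ≤ p i ^ 2 := sq_nonneg _
    nlinarith [sq_nonneg (p i)]
  have hsum : ∑ i, p i * |q i - 1| ≤ ∑ i, f i * g i :=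
    Finset.sum_le_sum fun i _ => hpt i
  have hcs : (∑ i, f i * g i) ^ 2 ≤ (∑ i, f i ^ 2) * ∑ i, g i ^ 2 :=
    Finset.sum_mul_sq_le_sq_mul_sq _ _ _
  have hf2 : ∑ i, f i ^ 2 = ∑ i, p i * ψ i := by
    apply Finset.sum_congr rfl
    intro i _
    exact Real.sq_sqrt (mul_nonneg (hp i) (hψ0 i))
  have hg2 : ∑ i, g i ^ 2 = 2 := by
    have : ∀ i ∈ univ, g i ^ 2 = (2/3) * (p i * q i) + (4/3) * p i := by
      intro i _
      rw [hg, Real.sq_sqrt (mul_nonneg (mul_nonneg (hp i) (by norm_num)) (by linarith [hq i]))]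
      ring
    rw [Finset.sum_congr rfl this, Finset.sum_add_distrib, ← Finset.mul_sum, ← Finset.mul_sum,
      hq1, hp1]
    norm_num
  have hS : ∑ i, p i * ψ i = ∑ i, p i * (q i * Real.log (q i)) := by
    have : ∀ i ∈ univ, p i * ψ i = p i * (q i * Real.log (q i)) - p i * q i + p i := by
      intro i _; rw [hψ]; ring
    rw [Finset.sum_congr rfl this, Finset.sum_add_distrib, Finset.sum_sub_distrib, hq1, hp1]
    ring
  have h0 : 0 ≤ ∑ i, p i * |q i - 1| :=
    Finset.sum_nonneg fun i _ => mul_nonneg (hp i) (abs_nonneg _)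
  calc (∑ i, p i * |q i - 1|) ^ 2 ≤ (∑ i, f i * g i) ^ 2 := by
        apply pow_le_pow_left₀ h0 hsum
    _ ≤ (∑ i, f i ^ 2) * ∑ i, g i ^ 2 := hcs
    _ = 2 * ∑ i, p i * (q i * Real.log (q i)) := by rw [hf2, hg2, hS]; ring


/-- Scaling identity for fiber entropies. -/
lemma cesi_ent_scale {ι : Type*} [Fintype ι] (w h : ι → ℝ) (p m : ℝ)
    (hw : ∀ i, 0 < w i) (hh : ∀ i, 0 ≤ h i) (hp : 0 < p) (hm : 0 < m) :
    (∑ i, w i * (h i * Real.log (h i))) / p -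
      (∑ i, w i * h i) / p * Real.log ((∑ i, w i * h i) / p) =
    m * ((∑ i, w i * (h i / m * Real.log (h i / m))) / p -
      (∑ i, w i * (h i / m)) / p * Real.log ((∑ i, w i * (h i / m)) / p)) := by
  set S := ∑ i, w i * h i with hS_def
  set T := ∑ i, w i * (h i * Real.log (h i)) with hT_def
  have hS' : ∑ i, w i * (h i / m) = S / m := by
    rw [hS_def, Finset.sum_div]
    exact Finset.sum_congr rfl fun i _ => by ring
  have hT' : ∑ i, w i * (h i / m * Real.log (h i / m)) = (T - S * Real.log m) / m := by
    have hper : ∀ i, w i * (h i / m * Real.log (h i / m)) =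
        (w i * (h i * Real.log (h i)) - w i * h i * Real.log m) / m := by
      intro i
      rcases eq_or_lt_of_le (hh i) with h0 | h0
      · rw [← h0]; simp
      · rw [Real.log_div (ne_of_gt h0) (ne_of_gt hm)]; field_simp
    rw [Finset.sum_congr rfl fun i _ => hper i, ← Finset.sum_div, Finset.sum_sub_distrib,
      ← Finset.sum_mul, hS_def, hT_def]
  rw [hS', hT']
  have hS0 : 0 ≤ S := Finset.sum_nonneg fun i _ => mul_nonneg (hw i).le (hh i)
  rcases eq_or_lt_of_le hS0 with h0 | h0
  · have hz : ∀ i, h i = 0 := by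
      intro i
      have h1 := (Finset.sum_eq_zero_iff_of_nonneg
        (fun i (_ : i ∈ univ) => mul_nonneg (hw i).le (hh i))).mp h0.symm i (mem_univ i)
      rcases mul_eq_zero.mp h1 with h | h
      · exact absurd h (ne_of_gt (hw i))
      · exact h
    have hT0 : T = 0 := Finset.sum_eq_zero fun i _ => by rw [hz i]; simp
    rw [hT0, ← h0]
    simp
  · rw [show S / m / p = S / p / m from by ring,
      Real.log_div (ne_of_gt (div_pos h0 hp)) (ne_of_gt hm)]
    field_simp
    ring

set_option maxHeartbeats 2000000 in
lemma cesi_core {A B C : Type} [Fintype A] [Fintype B] [Fintype C]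
    (μ : A × B × C → ℝ) (hpos : ∀ σ, 0 < μ σ) (hsum : ∑ σ, μ σ = 1)
    (ε : ℝ) (hε0 : 0 ≤ ε) (hε1 : ε ≤ 1/4)
    (hC : ∀ (fl : A → ℝ) (c : C),
      |condExpC μ (fun σ => fl σ.1) c - ∑ σ, μ σ * fl σ.1| ≤ ε * ∑ σ, μ σ * |fl σ.1|)
    (g : A × B × C → ℝ) (hg : ∀ σ, 0 ≤ g σ) (hg1 : ∑ σ, μ σ * g σ = 1) :
    ∑ σ, μ σ * (g σ * Real.log (g σ)) ≤
      (1 + 4 * ε) * ((∑ a, margA μ a * entA μ g a) + (∑ c, margC μ c * entC μ g c)) := by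
  classical
  -- nonemptiness
  have hne : Nonempty (A × B × C) := by
    by_contra h
    rw [not_nonempty_iff] at h
    rw [Finset.univ_eq_empty, Finset.sum_empty] at hsum
    norm_num at hsum
  obtain ⟨⟨a0, b0, c0⟩⟩ := hne
  haveI : Nonempty A := ⟨a0⟩
  haveI : Nonempty B := ⟨b0⟩
  haveI : Nonempty C := ⟨c0⟩
  -- sum splitting
  have hsplit : ∀ h : A × B × C → ℝ, ∑ σ, h σ = ∑ a, ∑ b, ∑ c, h (a, b, c) := by
    intro h
    rw [Fintype.sum_prod_type]
    exact Finset.sum_congr rfl fun a _ => Fintype.sum_prod_type _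
  have hsplitC : ∀ h : A × B × C → ℝ, ∑ σ, h σ = ∑ c, ∑ a, ∑ b, h (a, b, c) := by
    intro h
    rw [hsplit h]
    rw [show (∑ a, ∑ b, ∑ c, h (a, b, c)) = ∑ a, ∑ c, ∑ b, h (a, b, c) from
      Finset.sum_congr rfl fun a _ => Finset.sum_comm]
    exact Finset.sum_comm
  -- positivity of marginals
  have hpA : ∀ a, 0 < margA μ a := fun a =>
    Finset.sum_pos (fun b _ => Finset.sum_pos (fun c _ => hpos _) Finset.univ_nonempty)
      Finset.univ_nonempty
  have hpC : ∀ c, 0 < margC μ c := fun c =>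
    Finset.sum_pos (fun a _ => Finset.sum_pos (fun b _ => hpos _) Finset.univ_nonempty)
      Finset.univ_nonempty
  -- fiber identities
  have hA1 : ∀ (h : A × B × C → ℝ) a,
      margA μ a * condExpA μ h a = ∑ b, ∑ c, μ (a, b, c) * h (a, b, c) := by
    intro h a
    rw [condExpA, mul_comm, div_mul_cancel₀ _ (ne_of_gt (hpA a))]
  have hC1 : ∀ (h : A × B × C → ℝ) c,
      margC μ c * condExpC μ h c = ∑ a, ∑ b, μ (a, b, c) * h (a, b, c) := by
    intro h c
    rw [condExpC, mul_comm, div_mul_cancel₀ _ (ne_of_gt (hpC c))]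
  set u : A → ℝ := fun a => condExpA μ g a with hu_def
  set v : C → ℝ := fun c => condExpC μ g c with hv_def
  have hu_nonneg : ∀ a, 0 ≤ u a := fun a =>
    div_nonneg (Finset.sum_nonneg fun b _ => Finset.sum_nonneg fun c _ =>
      mul_nonneg (hpos _).le (hg _)) (hpA a).le
  have hv_nonneg : ∀ c, 0 ≤ v c := fun c =>
    div_nonneg (Finset.sum_nonneg fun a _ => Finset.sum_nonneg fun b _ =>
      mul_nonneg (hpos _).le (hg _)) (hpC c).le
  have hgsplit : ∑ σ, μ σ * g σ = ∑ a, ∑ b, ∑ c, μ (a,b,c) * g (a,b,c) := hsplit _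
  have hgsplitC : ∑ σ, μ σ * g σ = ∑ c, ∑ a, ∑ b, μ (a,b,c) * g (a,b,c) := hsplitC _
  have hu1 : ∑ a, margA μ a * u a = 1 := by
    rw [show (∑ a, margA μ a * u a) = ∑ a, ∑ b, ∑ c, μ (a,b,c) * g (a,b,c) from
      Finset.sum_congr rfl fun a _ => hA1 g a, ← hgsplit, hg1]
  have hv1 : ∑ c, margC μ c * v c = 1 := by
    rw [show (∑ c, margC μ c * v c) = ∑ c, ∑ a, ∑ b, μ (a,b,c) * g (a,b,c) from
      Finset.sum_congr rfl fun c _ => hC1 g c, ← hgsplitC, hg1]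
  have hmsplit : ∑ σ, μ σ = ∑ a, ∑ b, ∑ c, μ (a,b,c) := hsplit _
  have hmsplitC : ∑ σ, μ σ = ∑ c, ∑ a, ∑ b, μ (a,b,c) := hsplitC _
  have hpA1 : ∑ a, margA μ a = 1 := by
    rw [show (∑ a, margA μ a) = ∑ a, ∑ b, ∑ c, μ (a,b,c) from rfl, ← hmsplit, hsum]
  have hpC1 : ∑ c, margC μ c = 1 := by
    rw [show (∑ c, margC μ c) = ∑ c, ∑ a, ∑ b, μ (a,b,c) from rfl, ← hmsplitC, hsum]
  set E : ℝ := ∑ σ, μ σ * (g σ * Real.log (g σ)) with hE_def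
  set Su : ℝ := ∑ a, margA μ a * (u a * Real.log (u a)) with hSu_def
  set Sv : ℝ := ∑ c, margC μ c * (v c * Real.log (v c)) with hSv_def
  -- entropy decomposition
  have hEsplit : E = ∑ a, ∑ b, ∑ c, μ (a,b,c) * (g (a,b,c) * Real.log (g (a,b,c))) :=
    hsplit _
  have hEsplitC : E = ∑ c, ∑ a, ∑ b, μ (a,b,c) * (g (a,b,c) * Real.log (g (a,b,c))) :=
    hsplitC _
  have hEA : ∑ a, margA μ a * entA μ g a = E - Su := by
    have h1 : ∀ a, margA μ a * entA μ g a =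
        (∑ b, ∑ c, μ (a,b,c) * (g (a,b,c) * Real.log (g (a,b,c)))) -
          margA μ a * (u a * Real.log (u a)) := by
      intro a
      have h2 : entA μ g a =
          condExpA μ (fun σ => g σ * Real.log (g σ)) a - u a * Real.log (u a) := rfl
      rw [h2, mul_sub, hA1 (fun σ => g σ * Real.log (g σ)) a]
    rw [Finset.sum_congr rfl fun a _ => h1 a, Finset.sum_sub_distrib, ← hEsplit, hSu_def]
  have hEC : ∑ c, margC μ c * entC μ g c = E - Sv := by
    have h1 : ∀ c, margC μ c * entC μ g c =
        (∑ a, ∑ b, μ (a,b,c) * (g (a,b,c) * Real.log (g (a,b,c)))) -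
          margC μ c * (v c * Real.log (v c)) := by
      intro c
      have h2 : entC μ g c =
          condExpC μ (fun σ => g σ * Real.log (g σ)) c - v c * Real.log (v c) := rfl
      rw [h2, mul_sub, hC1 (fun σ => g σ * Real.log (g σ)) c]
    rw [Finset.sum_congr rfl fun c _ => h1 c, Finset.sum_sub_distrib, ← hEsplitC, hSv_def]
  -- Jensen: conditional entropies are nonnegative
  have hJA : ∀ a, 0 ≤ entA μ g a := by
    intro a
    have key : margA μ a * (u a * Real.log (u a)) ≤
        ∑ b, ∑ c, μ (a,b,c) * (g (a,b,c) * Real.log (g (a,b,c))) := by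
      rcases eq_or_lt_of_le (hu_nonneg a) with h0 | h0
      · have hz : ∑ b, ∑ c, μ (a,b,c) * g (a,b,c) = 0 := by
          rw [← hA1 g a, show condExpA μ g a = u a from rfl, ← h0, mul_zero]
        have hgz : ∀ b c', g (a,b,c') = 0 := by
          intro b c'
          have hnn : ∀ b' ∈ (univ : Finset B),
              (0:ℝ) ≤ ∑ c'', μ (a,b',c'') * g (a,b',c'') := fun b' _ =>
            Finset.sum_nonneg fun c'' _ => mul_nonneg (hpos _).le (hg _)
          have h3 := (Finset.sum_eq_zero_iff_of_nonneg hnn).mp hz b (mem_univ b)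
          have hnn2 : ∀ c'' ∈ (univ : Finset C), (0:ℝ) ≤ μ (a,b,c'') * g (a,b,c'') :=
            fun c'' _ => mul_nonneg (hpos _).le (hg _)
          have h4 := (Finset.sum_eq_zero_iff_of_nonneg hnn2).mp h3 c' (mem_univ c')
          rcases mul_eq_zero.mp h4 with h | h
          · exact absurd h (ne_of_gt (hpos _))
          · exact h
        have hz2 : ∑ b, ∑ c, μ (a,b,c) * (g (a,b,c) * Real.log (g (a,b,c))) = 0 :=
          Finset.sum_eq_zero fun b _ => Finset.sum_eq_zero fun c' _ => by
            rw [hgz b c']; simp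
        rw [hz2, ← h0]
        simp
      · have hum := hA1 g a
        have hpt : ∀ b ∈ (univ : Finset B), ∀ c' ∈ (univ : Finset C),
            μ (a,b,c') * (g (a,b,c') * (Real.log (u a) + 1) - u a) ≤
              μ (a,b,c') * (g (a,b,c') * Real.log (g (a,b,c'))) := fun b _ c' _ =>
          mul_le_mul_of_nonneg_left (cesi_tangent (hg _) h0) (hpos _).le
        have hsum2 : ∑ b, ∑ c', μ (a,b,c') * (g (a,b,c') * (Real.log (u a) + 1) - u a) ≤
            ∑ b, ∑ c', μ (a,b,c') * (g (a,b,c') * Real.log (g (a,b,c'))) :=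
          Finset.sum_le_sum fun b hb => Finset.sum_le_sum fun c' hc' => hpt b hb c' hc'
        have hexp : ∑ b, ∑ c', μ (a,b,c') * (g (a,b,c') * (Real.log (u a) + 1) - u a) =
            (Real.log (u a) + 1) * (∑ b, ∑ c', μ (a,b,c') * g (a,b,c')) -
              u a * margA μ a := by
          rw [margA, Finset.mul_sum, Finset.mul_sum, ← Finset.sum_sub_distrib]
          apply Finset.sum_congr rfl; intro b _
          rw [Finset.mul_sum, Finset.mul_sum, ← Finset.sum_sub_distrib]
          apply Finset.sum_congr rfl; intro c' _
          ring
        calc margA μ a * (u a * Real.log (u a))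
            = (Real.log (u a) + 1) * (margA μ a * u a) - u a * margA μ a := by ring
          _ = (Real.log (u a) + 1) * (∑ b, ∑ c', μ (a,b,c') * g (a,b,c')) -
              u a * margA μ a := by rw [hum]
          _ = ∑ b, ∑ c', μ (a,b,c') * (g (a,b,c') * (Real.log (u a) + 1) - u a) :=
              hexp.symm
          _ ≤ _ := hsum2
    have h2 : entA μ g a =
        (∑ b, ∑ c, μ (a,b,c) * (g (a,b,c) * Real.log (g (a,b,c)))) / margA μ a -
          u a * Real.log (u a) := rfl
    rw [h2, sub_nonneg, le_div_iff₀ (hpA a)]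
    nlinarith [key]
  have hJC : ∀ c, 0 ≤ entC μ g c := by
    intro c
    have key : margC μ c * (v c * Real.log (v c)) ≤
        ∑ a, ∑ b, μ (a,b,c) * (g (a,b,c) * Real.log (g (a,b,c))) := by
      rcases eq_or_lt_of_le (hv_nonneg c) with h0 | h0
      · have hz : ∑ a, ∑ b, μ (a,b,c) * g (a,b,c) = 0 := by
          rw [← hC1 g c, show condExpC μ g c = v c from rfl, ← h0, mul_zero]
        have hgz : ∀ a b, g (a,b,c) = 0 := by
          intro a b
          have hnn : ∀ a' ∈ (univ : Finset A),
              (0:ℝ) ≤ ∑ b', μ (a',b',c) * g (a',b',c) := fun a' _ =>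
            Finset.sum_nonneg fun b' _ => mul_nonneg (hpos _).le (hg _)
          have h3 := (Finset.sum_eq_zero_iff_of_nonneg hnn).mp hz a (mem_univ a)
          have hnn2 : ∀ b' ∈ (univ : Finset B), (0:ℝ) ≤ μ (a,b',c) * g (a,b',c) :=
            fun b' _ => mul_nonneg (hpos _).le (hg _)
          have h4 := (Finset.sum_eq_zero_iff_of_nonneg hnn2).mp h3 b (mem_univ b)
          rcases mul_eq_zero.mp h4 with h | h
          · exact absurd h (ne_of_gt (hpos _))
          · exact h
        have hz2 : ∑ a, ∑ b, μ (a,b,c) * (g (a,b,c) * Real.log (g (a,b,c))) = 0 :=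
          Finset.sum_eq_zero fun a _ => Finset.sum_eq_zero fun b _ => by
            rw [hgz a b]; simp
        rw [hz2, ← h0]
        simp
      · have hvm := hC1 g c
        have hsum2 : ∑ a, ∑ b, μ (a,b,c) * (g (a,b,c) * (Real.log (v c) + 1) - v c) ≤
            ∑ a, ∑ b, μ (a,b,c) * (g (a,b,c) * Real.log (g (a,b,c))) :=
          Finset.sum_le_sum fun a _ => Finset.sum_le_sum fun b _ =>
            mul_le_mul_of_nonneg_left (cesi_tangent (hg _) h0) (hpos _).le
        have hexp : ∑ a, ∑ b, μ (a,b,c) * (g (a,b,c) * (Real.log (v c) + 1) - v c) =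
            (Real.log (v c) + 1) * (∑ a, ∑ b, μ (a,b,c) * g (a,b,c)) -
              v c * margC μ c := by
          rw [margC, Finset.mul_sum, Finset.mul_sum, ← Finset.sum_sub_distrib]
          apply Finset.sum_congr rfl; intro a _
          rw [Finset.mul_sum, Finset.mul_sum, ← Finset.sum_sub_distrib]
          apply Finset.sum_congr rfl; intro b _
          ring
        calc margC μ c * (v c * Real.log (v c))
            = (Real.log (v c) + 1) * (margC μ c * v c) - v c * margC μ c := by ring
          _ = (Real.log (v c) + 1) * (∑ a, ∑ b, μ (a,b,c) * g (a,b,c)) -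
              v c * margC μ c := by rw [hvm]
          _ = ∑ a, ∑ b, μ (a,b,c) * (g (a,b,c) * (Real.log (v c) + 1) - v c) :=
              hexp.symm
          _ ≤ _ := hsum2
    have h2 : entC μ g c =
        (∑ a, ∑ b, μ (a,b,c) * (g (a,b,c) * Real.log (g (a,b,c)))) / margC μ c -
          v c * Real.log (v c) := rfl
    rw [h2, sub_nonneg, le_div_iff₀ (hpC c)]
    nlinarith [key]
  -- tower identities
  have hTowerA : ∑ σ, μ σ * (g σ * Real.log (u σ.1)) = Su := by
    have h1 : ∑ σ, μ σ * (g σ * Real.log (u σ.1)) =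
        ∑ a, ∑ b, ∑ c, μ (a,b,c) * (g (a,b,c) * Real.log (u a)) := hsplit _
    rw [h1, hSu_def]
    apply Finset.sum_congr rfl; intro a _
    have hexp : ∑ b, ∑ c, μ (a,b,c) * (g (a,b,c) * Real.log (u a)) =
        (∑ b, ∑ c, μ (a,b,c) * g (a,b,c)) * Real.log (u a) := by
      rw [Finset.sum_mul]
      apply Finset.sum_congr rfl; intro b _
      rw [Finset.sum_mul]
      apply Finset.sum_congr rfl; intro c _
      ring
    rw [hexp, ← hA1 g a]
    ring
  have hTowerC : ∑ σ, μ σ * (g σ * Real.log (v σ.2.2)) = Sv := by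
    have h1 : ∑ σ, μ σ * (g σ * Real.log (v σ.2.2)) =
        ∑ c, ∑ a, ∑ b, μ (a,b,c) * (g (a,b,c) * Real.log (v c)) := hsplitC _
    rw [h1, hSv_def]
    apply Finset.sum_congr rfl; intro c _
    have hexp : ∑ a, ∑ b, μ (a,b,c) * (g (a,b,c) * Real.log (v c)) =
        (∑ a, ∑ b, μ (a,b,c) * g (a,b,c)) * Real.log (v c) := by
      rw [Finset.sum_mul]
      apply Finset.sum_congr rfl; intro a _
      rw [Finset.sum_mul]
      apply Finset.sum_congr rfl; intro b _
      ring
    rw [hexp, ← hC1 g c]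
    ring
  set t : ℝ := ∑ σ, μ σ * (u σ.1 * v σ.2.2) with ht_def
  -- key inequality
  have hKey : Su + Sv ≤ E + (t - 1) := by
    have hpt : ∀ σ : A × B × C, μ σ * (g σ * Real.log (u σ.1)) +
        μ σ * (g σ * Real.log (v σ.2.2)) ≤
        μ σ * (g σ * Real.log (g σ)) + (μ σ * (u σ.1 * v σ.2.2) - μ σ * g σ) := by
      rintro ⟨a, b, c⟩
      simp only
      rcases eq_or_lt_of_le (hg (a,b,c)) with h0 | h0
      · have hnn : 0 ≤ μ (a,b,c) * (u a * v c) :=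
          mul_nonneg (hpos _).le (mul_nonneg (hu_nonneg a) (hv_nonneg c))
        rw [← h0]
        simp
        linarith
      · have hua : 0 < u a := by
          have h2 : 0 < margA μ a * u a := by
            rw [show margA μ a * u a = margA μ a * condExpA μ g a from rfl, hA1 g a]
            have t1 : μ (a,b,c) * g (a,b,c) ≤ ∑ c', μ (a,b,c') * g (a,b,c') :=
              Finset.single_le_sum (f := fun c' => μ (a,b,c') * g (a,b,c'))
                (fun c' _ => mul_nonneg (hpos _).le (hg _)) (mem_univ c)
            have t2 : ∑ c', μ (a,b,c') * g (a,b,c') ≤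
                ∑ b', ∑ c', μ (a,b',c') * g (a,b',c') :=
              Finset.single_le_sum (f := fun b' => ∑ c', μ (a,b',c') * g (a,b',c'))
                (fun b' _ => Finset.sum_nonneg fun c' _ =>
                  mul_nonneg (hpos _).le (hg _)) (mem_univ b)
            have t3 : 0 < μ (a,b,c) * g (a,b,c) := mul_pos (hpos _) h0
            linarith
          by_contra hcon
          push_neg at hcon
          nlinarith [hpA a]
        have hvc : 0 < v c := by
          have h2 : 0 < margC μ c * v c := by
            rw [show margC μ c * v c = margC μ c * condExpC μ g c from rfl, hC1 g c]
            have t1 : μ (a,b,c) * g (a,b,c) ≤ ∑ b', μ (a,b',c) * g (a,b',c) :=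
              Finset.single_le_sum (f := fun b' => μ (a,b',c) * g (a,b',c))
                (fun b' _ => mul_nonneg (hpos _).le (hg _)) (mem_univ b)
            have t2 : ∑ b', μ (a,b',c) * g (a,b',c) ≤
                ∑ a', ∑ b', μ (a',b',c) * g (a',b',c) :=
              Finset.single_le_sum (f := fun a' => ∑ b', μ (a',b',c) * g (a',b',c))
                (fun a' _ => Finset.sum_nonneg fun b' _ =>
                  mul_nonneg (hpos _).le (hg _)) (mem_univ a)
            have t3 : 0 < μ (a,b,c) * g (a,b,c) := mul_pos (hpos _) h0
            linarith
          by_contra hcon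
          push_neg at hcon
          nlinarith [hpC c]
        have hlog := Real.log_le_sub_one_of_pos (div_pos (mul_pos hua hvc) h0)
        rw [Real.log_div (ne_of_gt (mul_pos hua hvc)) (ne_of_gt h0),
          Real.log_mul (ne_of_gt hua) (ne_of_gt hvc)] at hlog
        have h4 : g (a,b,c) * (Real.log (u a) + Real.log (v c) - Real.log (g (a,b,c))) ≤
            u a * v c - g (a,b,c) := by
          have h5 := mul_le_mul_of_nonneg_left hlog h0.le
          have h6 : g (a,b,c) * (u a * v c / g (a,b,c) - 1) = u a * v c - g (a,b,c) := by
            field_simp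
          rw [h6] at h5
          exact h5
        have h7 := mul_le_mul_of_nonneg_left h4 (hpos (a,b,c)).le
        nlinarith [h7]
    have hsum3 := Finset.sum_le_sum fun σ (_ : σ ∈ (univ : Finset (A × B × C))) => hpt σ
    rw [Finset.sum_add_distrib, Finset.sum_add_distrib, Finset.sum_sub_distrib,
      hTowerA, hTowerC, hg1, ← hE_def, ← ht_def] at hsum3
    linarith
  set Nu : ℝ := ∑ σ, μ σ * |u σ.1 - 1| with hNu_def
  set Nv : ℝ := ∑ σ, μ σ * |v σ.2.2 - 1| with hNv_def
  have hmu_u : ∑ σ, μ σ * u σ.1 = 1 := by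
    have h1 : ∑ σ, μ σ * u σ.1 = ∑ a, ∑ b, ∑ c, μ (a,b,c) * u a := hsplit _
    rw [h1, ← hu1]
    apply Finset.sum_congr rfl; intro a _
    rw [margA, Finset.sum_mul]
    apply Finset.sum_congr rfl; intro b _
    rw [Finset.sum_mul]
  have hmu_v : ∑ σ, μ σ * v σ.2.2 = 1 := by
    have h1 : ∑ σ, μ σ * v σ.2.2 = ∑ c, ∑ a, ∑ b, μ (a,b,c) * v c := hsplitC _
    rw [h1, ← hv1]
    apply Finset.sum_congr rfl; intro c _
    rw [margC, Finset.sum_mul]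
    apply Finset.sum_congr rfl; intro a _
    rw [Finset.sum_mul]
  have hNvC : Nv = ∑ c, margC μ c * |v c - 1| := by
    rw [hNv_def]
    have h1 : ∑ σ, μ σ * |v σ.2.2 - 1| = ∑ c, ∑ a, ∑ b, μ (a,b,c) * |v c - 1| :=
      hsplitC _
    rw [h1]
    apply Finset.sum_congr rfl; intro c _
    rw [margC, Finset.sum_mul]
    apply Finset.sum_congr rfl; intro a _
    rw [Finset.sum_mul]
  have hNuA : Nu = ∑ a, margA μ a * |u a - 1| := by
    rw [hNu_def]
    have h1 : ∑ σ, μ σ * |u σ.1 - 1| = ∑ a, ∑ b, ∑ c, μ (a,b,c) * |u a - 1| :=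
      hsplit _
    rw [h1]
    apply Finset.sum_congr rfl; intro a _
    rw [margA, Finset.sum_mul]
    apply Finset.sum_congr rfl; intro b _
    rw [Finset.sum_mul]
  have hCov : t - 1 ≤ ε * (Nu * Nv) := by
    have hzero : ∑ σ, μ σ * (u σ.1 - 1) = 0 := by
      simp only [mul_sub, mul_one]
      rw [Finset.sum_sub_distrib, hmu_u, hsum]
      ring
    have hhyp : ∀ c, |condExpC μ (fun σ => u σ.1 - 1) c| ≤ ε * Nu := by
      intro c
      have h2 := hC (fun a => u a - 1) c
      rw [hzero, sub_zero] at h2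
      rw [hNu_def]
      exact h2
    have hfact : t - 1 = ∑ c, (margC μ c * condExpC μ (fun σ => u σ.1 - 1) c) * (v c - 1) := by
      have hexp1 : t - 1 = ∑ σ, μ σ * ((u σ.1 - 1) * (v σ.2.2 - 1)) := by
        have e : ∀ σ ∈ (univ : Finset (A × B × C)),
            μ σ * ((u σ.1 - 1) * (v σ.2.2 - 1)) =
              μ σ * (u σ.1 * v σ.2.2) - μ σ * u σ.1 - μ σ * v σ.2.2 + μ σ :=
          fun σ _ => by ring
        rw [Finset.sum_congr rfl e, Finset.sum_add_distrib, Finset.sum_sub_distrib,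
          Finset.sum_sub_distrib, hmu_u, hmu_v, hsum, ← ht_def]
        ring
      rw [hexp1]
      have h1 : ∑ σ, μ σ * ((u σ.1 - 1) * (v σ.2.2 - 1)) =
          ∑ c, ∑ a, ∑ b, μ (a,b,c) * ((u a - 1) * (v c - 1)) := hsplitC _
      rw [h1]
      apply Finset.sum_congr rfl; intro c _
      rw [hC1 (fun σ => u σ.1 - 1) c]
      rw [Finset.sum_mul]
      apply Finset.sum_congr rfl; intro a _
      rw [Finset.sum_mul]
      apply Finset.sum_congr rfl; intro b _
      ring
    calc t - 1 = ∑ c, (margC μ c * condExpC μ (fun σ => u σ.1 - 1) c) * (v c - 1) := hfact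
      _ ≤ |∑ c, (margC μ c * condExpC μ (fun σ => u σ.1 - 1) c) * (v c - 1)| :=
          le_abs_self _
      _ ≤ ∑ c, |(margC μ c * condExpC μ (fun σ => u σ.1 - 1) c) * (v c - 1)| :=
          Finset.abs_sum_le_sum_abs _ _
      _ ≤ ∑ c, margC μ c * (ε * Nu) * |v c - 1| := by
          apply Finset.sum_le_sum
          intro c _
          rw [abs_mul, abs_mul, abs_of_nonneg (hpC c).le]
          exact mul_le_mul_of_nonneg_right
            (mul_le_mul_of_nonneg_left (hhyp c) (hpC c).le) (abs_nonneg _)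
      _ = ε * (Nu * Nv) := by
          have hh : ε * Nu * (∑ c, margC μ c * |v c - 1|) =
              ∑ c, margC μ c * (ε * Nu) * |v c - 1| := by
            rw [Finset.mul_sum]
            exact Finset.sum_congr rfl fun c _ => by ring
          rw [hNvC, ← mul_assoc, ← hh]
  have hPinA : Nu ^ 2 ≤ 2 * Su := by
    rw [hNuA, hSu_def]
    exact cesi_pinsker (fun a => margA μ a) u (fun a => (hpA a).le) hu_nonneg hpA1 hu1
  have hPinC : Nv ^ 2 ≤ 2 * Sv := by
    rw [hNvC, hSv_def]
    exact cesi_pinsker (fun c => margC μ c) v (fun c => (hpC c).le) hv_nonneg hpC1 hv1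
  -- conclusion
  have hNu0 : 0 ≤ Nu := Finset.sum_nonneg fun σ _ => mul_nonneg (hpos σ).le (abs_nonneg _)
  have hNv0 : 0 ≤ Nv := Finset.sum_nonneg fun σ _ => mul_nonneg (hpos σ).le (abs_nonneg _)
  have hS : Su + Sv ≤ E + ε * (Su + Sv) := by
    have h1 : Nu * Nv ≤ Su + Sv := by nlinarith [sq_nonneg (Nu - Nv)]
    have h2 : ε * (Nu * Nv) ≤ ε * (Su + Sv) := mul_le_mul_of_nonneg_left h1 hε0
    linarith
  have hR0 : 0 ≤ (∑ a, margA μ a * entA μ g a) + (∑ c, margC μ c * entC μ g c) := by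
    have r1 : 0 ≤ ∑ a, margA μ a * entA μ g a :=
      Finset.sum_nonneg fun a _ => mul_nonneg (hpA a).le (hJA a)
    have r2 : 0 ≤ ∑ c, margC μ c * entC μ g c :=
      Finset.sum_nonneg fun c _ => mul_nonneg (hpC c).le (hJC c)
    linarith
  rw [hEA, hEC] at hR0 ⊢
  nlinarith [hS, hR0, hε0, hε1, mul_nonneg hε0 hR0,
    mul_nonneg (mul_nonneg hε0 hε0) hR0,
    mul_nonneg hε0 (by linarith [hS] : (0:ℝ) ≤ E + ε * (Su + Sv) - (Su + Sv))]


/-- Cesi-type entropy decomposition under weak dependence between the two outer blocks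
of a three-block product space (left block `A`, overlap `B`, right block `C`): there is
a universal constant `K` such that ε-decay of correlations between the outer blocks
implies `Ent(f²) ≤ (1 + Kε) (μ[Ent(f²|F_ℓ)] + μ[Ent(f²|F_r)])`. -/
theorem cesi_entropy_decomposition :
    ∃ K : ℝ, 0 < K ∧
    ∀ (A B C : Type) (_ : Fintype A) (_ : Fintype B) (_ : Fintype C),
    ∀ μ : A × B × C → ℝ, (∀ σ, 0 < μ σ) → (∑ σ, μ σ = 1) →
    ∀ ε : ℝ, 0 ≤ ε → ε ≤ 1/4 →
    (∀ (fl : A → ℝ) (c : C),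
      |condExpC μ (fun σ => fl σ.1) c - ∑ σ, μ σ * fl σ.1| ≤ ε * ∑ σ, μ σ * |fl σ.1|) →
    (∀ (fr : C → ℝ) (a : A),
      |condExpA μ (fun σ => fr σ.2.2) a - ∑ σ, μ σ * fr σ.2.2| ≤
        ε * ∑ σ, μ σ * |fr σ.2.2|) →
    ∀ f : A × B × C → ℝ,
      (∑ σ, μ σ * ((f σ)^2 * Real.log ((f σ)^2))) -
          (∑ σ, μ σ * (f σ)^2) * Real.log (∑ σ, μ σ * (f σ)^2) ≤
        (1 + K * ε) * ((∑ a, margA μ a * entA μ (fun σ => (f σ)^2) a) +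
          (∑ c, margC μ c * entC μ (fun σ => (f σ)^2) c)) := by
  refine ⟨4, by norm_num, ?_⟩
  intro A B C _ _ _ μ hpos hsum ε hε0 hε1 hCc hAa f
  have hm0 : 0 ≤ ∑ σ, μ σ * (f σ)^2 :=
    Finset.sum_nonneg fun σ _ => mul_nonneg (hpos σ).le (sq_nonneg _)
  rcases eq_or_lt_of_le hm0 with h0 | h0
  · -- degenerate case: f ≡ 0
    have hfz : ∀ σ, f σ = 0 := by
      intro σ
      have h1 := (Finset.sum_eq_zero_iff_of_nonneg
        (fun σ (_ : σ ∈ univ) => mul_nonneg (hpos σ).le (sq_nonneg (f σ)))).mp h0.symm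
        σ (mem_univ σ)
      rcases mul_eq_zero.mp h1 with h | h
      · exact absurd h (ne_of_gt (hpos σ))
      · exact (pow_eq_zero_iff (by norm_num : (2:ℕ) ≠ 0)).mp h
    simp [hfz, entA, entC, condExpA, condExpC]
  · -- main case
    set m : ℝ := ∑ σ, μ σ * (f σ)^2 with hm_def
    -- nonemptiness and positive marginals
    have hne : Nonempty (A × B × C) := by
      by_contra h
      rw [not_nonempty_iff] at h
      rw [Finset.univ_eq_empty, Finset.sum_empty] at hsum
      norm_num at hsum
    obtain ⟨⟨a0, b0, c0⟩⟩ := hne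
    haveI : Nonempty A := ⟨a0⟩
    haveI : Nonempty B := ⟨b0⟩
    haveI : Nonempty C := ⟨c0⟩
    have hpA : ∀ a, 0 < margA μ a := fun a =>
      Finset.sum_pos (fun b _ => Finset.sum_pos (fun c _ => hpos _) Finset.univ_nonempty)
        Finset.univ_nonempty
    have hpC : ∀ c, 0 < margC μ c := fun c =>
      Finset.sum_pos (fun a _ => Finset.sum_pos (fun b _ => hpos _) Finset.univ_nonempty)
        Finset.univ_nonempty
    -- normalized function
    have hg1 : ∑ σ, μ σ * ((f σ)^2 / m) = 1 := by
      have h1 : ∑ σ, μ σ * ((f σ)^2 / m) = (∑ σ, μ σ * (f σ)^2) * m⁻¹ := by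
        rw [Finset.sum_mul]
        exact Finset.sum_congr rfl fun σ _ => by ring
      rw [h1, ← hm_def, mul_inv_cancel₀ (ne_of_gt h0)]
    have key := cesi_core μ hpos hsum ε hε0 hε1 hCc (fun σ => (f σ)^2 / m)
      (fun σ => div_nonneg (sq_nonneg _) h0.le) hg1
    -- scaling of entropies
    have hscaleA : ∀ a, entA μ (fun σ => (f σ)^2) a =
        m * entA μ (fun σ => (f σ)^2 / m) a := by
      intro a
      have h2 := cesi_ent_scale (ι := B × C) (fun bc => μ (a, bc.1, bc.2))
        (fun bc => (f (a, bc.1, bc.2))^2) (margA μ a) m (fun bc => hpos _)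
        (fun bc => sq_nonneg _) (hpA a) h0
      simp only [Fintype.sum_prod_type] at h2
      exact h2
    have hscaleC : ∀ c, entC μ (fun σ => (f σ)^2) c =
        m * entC μ (fun σ => (f σ)^2 / m) c := by
      intro c
      have h2 := cesi_ent_scale (ι := A × B) (fun ab => μ (ab.1, ab.2, c))
        (fun ab => (f (ab.1, ab.2, c))^2) (margC μ c) m (fun ab => hpos _)
        (fun ab => sq_nonneg _) (hpC c) h0
      simp only [Fintype.sum_prod_type] at h2
      exact h2
    -- scaling of the total entropy
    have hscaleL : ∑ σ, μ σ * ((f σ)^2 * Real.log ((f σ)^2)) - m * Real.log m =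
        m * ∑ σ, μ σ * ((f σ)^2 / m * Real.log ((f σ)^2 / m)) := by
      have hper : ∀ σ, m * (μ σ * ((f σ)^2 / m * Real.log ((f σ)^2 / m))) =
          μ σ * ((f σ)^2 * Real.log ((f σ)^2)) - μ σ * (f σ)^2 * Real.log m := by
        intro σ
        rcases eq_or_ne (f σ) 0 with h | h
        · simp [h]
        · have hf2 : (0:ℝ) < (f σ)^2 := by positivity
          rw [Real.log_div (ne_of_gt hf2) (ne_of_gt h0)]
          field_simp
      have h3 : m * ∑ σ, μ σ * ((f σ)^2 / m * Real.log ((f σ)^2 / m)) =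
          ∑ σ, (μ σ * ((f σ)^2 * Real.log ((f σ)^2)) - μ σ * (f σ)^2 * Real.log m) := by
        rw [Finset.mul_sum]
        exact Finset.sum_congr rfl fun σ _ => hper σ
      rw [h3, Finset.sum_sub_distrib, ← Finset.sum_mul, ← hm_def]
    -- combine
    have hRA : ∑ a, margA μ a * entA μ (fun σ => (f σ)^2) a =
        m * ∑ a, margA μ a * entA μ (fun σ => (f σ)^2 / m) a := by
      rw [Finset.mul_sum]
      exact Finset.sum_congr rfl fun a _ => by rw [hscaleA a]; ring
    have hRC : ∑ c, margC μ c * entC μ (fun σ => (f σ)^2) c =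
        m * ∑ c, margC μ c * entC μ (fun σ => (f σ)^2 / m) c := by
      rw [Finset.mul_sum]
      exact Finset.sum_congr rfl fun c _ => by rw [hscaleC c]; ring
    calc ∑ σ, μ σ * ((f σ)^2 * Real.log ((f σ)^2)) - m * Real.log m
        = m * ∑ σ, μ σ * ((f σ)^2 / m * Real.log ((f σ)^2 / m)) := hscaleL
      _ ≤ m * ((1 + 4 * ε) * ((∑ a, margA μ a * entA μ (fun σ => (f σ)^2 / m) a) +
            (∑ c, margC μ c * entC μ (fun σ => (f σ)^2 / m) c))) :=
          mul_le_mul_of_nonneg_left key h0.le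
      _ = (1 + 4 * ε) * ((∑ a, margA μ a * entA μ (fun σ => (f σ)^2) a) +
            (∑ c, margC μ c * entC μ (fun σ => (f σ)^2) c)) := by
          rw [hRA, hRC]; ring


end
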